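/- arXiv:1602.03259 — 2 statements merged into one kernel-verified Lean document; each statement's English description precedes it below -/
import Mathlib

section
/- For cyclic pursuit of n bugs in ℝ^d, at any time t at which not all bugs coincide, the total length l(t) = Σ_{i∈ℤ/n} ‖b_{i+1}(t) − b_i(t)‖ satisfies |dl/dt(t)| ≥ min[1, n(1 − cos(2π/n))]. Consequently, the pursuit ends by time l(0)·(min[1, n(1 − cos(2π/n))])^{-1}, a bound that grows linearly in n. -/
open Set Filter
open scoped Topology Real

open InnerProductGeometry
open scoped RealInnerProductSpace

section AuxGeometry

variable {V : Type*} [NormedAddCommGroup V] [InnerProductSpace ℝ V]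

lemma my_sin_angle_unit {x y : V} (hx : ‖x‖ = 1) (hy : ‖y‖ = 1) :
    Real.sin (angle x y) = Real.sqrt (1 - ⟪x, y⟫ * ⟪x, y⟫) := by
  have h := sin_angle_mul_norm_mul_norm x y
  rw [hx, hy, real_inner_self_eq_norm_mul_norm, real_inner_self_eq_norm_mul_norm, hx, hy] at h
  simpa using h

lemma my_cos_angle_unit {x y : V} (hx : ‖x‖ = 1) (hy : ‖y‖ = 1) :
    Real.cos (angle x y) = ⟪x, y⟫ := by
  rw [cos_angle, hx, hy]; simp

lemma cos_add_le_cos_angle_unit {x y z : V} (hx : ‖x‖ = 1) (hy : ‖y‖ = 1) (hz : ‖z‖ = 1) :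
    Real.cos (angle x y + angle y z) ≤ Real.cos (angle x z) := by
  rw [Real.cos_add, my_cos_angle_unit hx hy, my_cos_angle_unit hy hz,
    my_cos_angle_unit hx hz, my_sin_angle_unit hx hy, my_sin_angle_unit hy hz]
  set u := x - ⟪x, y⟫ • y with hu
  set v := z - ⟪z, y⟫ • y with hv
  have hyy : ⟪y, y⟫ = 1 := by
    rw [real_inner_self_eq_norm_mul_norm, hy]; norm_num
  have hxx : ⟪x, x⟫ = 1 := by
    rw [real_inner_self_eq_norm_mul_norm, hx]; norm_num
  have hzz : ⟪z, z⟫ = 1 := by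
    rw [real_inner_self_eq_norm_mul_norm, hz]; norm_num
  have huu : ⟪u, u⟫ = 1 - ⟪x, y⟫ * ⟪x, y⟫ := by
    simp only [hu, real_inner_smul_left, real_inner_smul_right,
      inner_sub_left, inner_sub_right]
    rw [real_inner_comm y x, hxx, hyy]; ring
  have hvv : ⟪v, v⟫ = 1 - ⟪z, y⟫ * ⟪z, y⟫ := by
    simp only [hv, real_inner_smul_left, real_inner_smul_right,
      inner_sub_left, inner_sub_right]
    rw [real_inner_comm y z, hzz, hyy]; ring
  have huv : ⟪u, v⟫ = ⟪x, z⟫ - ⟪x, y⟫ * ⟪z, y⟫ := by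
    simp only [hu, hv, real_inner_smul_left, real_inner_smul_right,
      inner_sub_left, inner_sub_right]
    rw [real_inner_comm y x, real_inner_comm z x, real_inner_comm y z, hyy]; ring
  have hnu : Real.sqrt (1 - ⟪x, y⟫ * ⟪x, y⟫) = ‖u‖ := by
    rw [← huu, real_inner_self_eq_norm_mul_norm, Real.sqrt_mul_self (norm_nonneg u)]
  have hnv : Real.sqrt (1 - ⟪y, z⟫ * ⟪y, z⟫) = ‖v‖ := by
    rw [real_inner_comm y z] at hvv
    rw [← hvv, real_inner_self_eq_norm_mul_norm,
      Real.sqrt_mul_self (norm_nonneg v)]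
  have hcs : -(‖u‖ * ‖v‖) ≤ ⟪u, v⟫ := neg_le_of_abs_le (abs_real_inner_le_norm u v)
  rw [hnu, hnv]
  rw [real_inner_comm y z] at huv
  linarith [huv]

theorem angle_triangle' (x y z : V) : angle x z ≤ angle x y + angle y z := by
  by_cases hy : y = 0
  · subst hy
    rw [angle_zero_right, angle_zero_left]
    linarith [angle_le_pi x z]
  by_cases hx : x = 0
  · subst hx
    rw [angle_zero_left, angle_zero_left]
    linarith [angle_nonneg y z]
  by_cases hz : z = 0
  · subst hz
    rw [angle_zero_right, angle_zero_right]
    linarith [angle_nonneg x y]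
  have px : (0:ℝ) < ‖x‖⁻¹ := inv_pos.mpr (norm_pos_iff.mpr hx)
  have py : (0:ℝ) < ‖y‖⁻¹ := inv_pos.mpr (norm_pos_iff.mpr hy)
  have pz : (0:ℝ) < ‖z‖⁻¹ := inv_pos.mpr (norm_pos_iff.mpr hz)
  have hxu : angle x y = angle (‖x‖⁻¹ • x) (‖y‖⁻¹ • y) := by
    rw [angle_smul_left_of_pos _ _ px, angle_smul_right_of_pos _ _ py]
  have hyu : angle y z = angle (‖y‖⁻¹ • y) (‖z‖⁻¹ • z) := by
    rw [angle_smul_left_of_pos _ _ py, angle_smul_right_of_pos _ _ pz]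
  have hzu : angle x z = angle (‖x‖⁻¹ • x) (‖z‖⁻¹ • z) := by
    rw [angle_smul_left_of_pos _ _ px, angle_smul_right_of_pos _ _ pz]
  have nx : ‖(‖x‖⁻¹ • x)‖ = 1 := by
    rw [norm_smul, norm_inv, norm_norm, inv_mul_cancel₀ (norm_ne_zero_iff.mpr hx)]
  have ny : ‖(‖y‖⁻¹ • y)‖ = 1 := by
    rw [norm_smul, norm_inv, norm_norm, inv_mul_cancel₀ (norm_ne_zero_iff.mpr hy)]
  have nz : ‖(‖z‖⁻¹ • z)‖ = 1 := by
    rw [norm_smul, norm_inv, norm_norm, inv_mul_cancel₀ (norm_ne_zero_iff.mpr hz)]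
  rw [hxu, hyu, hzu]
  set X := ‖x‖⁻¹ • x
  set Y := ‖y‖⁻¹ • y
  set Z := ‖z‖⁻¹ • z
  rcases le_or_gt π (angle X Y + angle Y Z) with h | h
  · exact (angle_le_pi X Z).trans h
  by_contra hlt
  push_neg at hlt
  have h1 : Real.cos (angle X Z) < Real.cos (angle X Y + angle Y Z) := by
    apply Real.strictAntiOn_cos
      ⟨add_nonneg (angle_nonneg X Y) (angle_nonneg Y Z), h.le⟩
      ⟨angle_nonneg X Z, angle_le_pi X Z⟩ hlt
  linarith [cos_add_le_cos_angle_unit nx ny nz]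

lemma angle_add_le {x y : V} (hx : x ≠ 0) (hy : y ≠ 0) (hxy : x + y ≠ 0) :
    angle x (x + y) + angle (x + y) y ≤ angle x y := by
  set a := ‖x‖ with hadef
  set b := ‖y‖ with hbdef
  set N := ‖x + y‖ with hNdef
  set p := ⟪x, y⟫ with hpdef
  have ha : 0 < a := norm_pos_iff.mpr hx
  have hb : 0 < b := norm_pos_iff.mpr hy
  have hN : 0 < N := norm_pos_iff.mpr hxy
  have hN2 : N ^ 2 = a ^ 2 + 2 * p + b ^ 2 := norm_add_sq_real x y
  have hxu : ⟪x, x + y⟫ = a ^ 2 + p := by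
    rw [inner_add_right, real_inner_self_eq_norm_sq]
  have huy : ⟪x + y, y⟫ = p + b ^ 2 := by
    rw [inner_add_left, real_inner_self_eq_norm_sq]
  have hxx : ⟪x, x⟫ = a ^ 2 := real_inner_self_eq_norm_sq x
  have hyy : ⟪y, y⟫ = b ^ 2 := real_inner_self_eq_norm_sq y
  have huu : ⟪x + y, x + y⟫ = N ^ 2 := real_inner_self_eq_norm_sq (x + y)
  have hcs : p ^ 2 ≤ a ^ 2 * b ^ 2 := by
    have := abs_real_inner_le_norm x y
    nlinarith [this, abs_nonneg p, le_abs_self p, neg_abs_le p]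
  set S := Real.sqrt (a ^ 2 * b ^ 2 - p ^ 2) with hSdef
  have hS0 : 0 ≤ S := Real.sqrt_nonneg _
  have hSS : S ^ 2 = a ^ 2 * b ^ 2 - p ^ 2 := by
    rw [hSdef, Real.sq_sqrt (by linarith)]
  set α := angle x (x + y) with hαdef
  set β := angle (x + y) y with hβdef
  set γ := angle x y with hγdef
  have cosα : Real.cos α = (a ^ 2 + p) / (a * N) := by rw [hαdef, cos_angle, hxu]
  have cosβ : Real.cos β = (p + b ^ 2) / (N * b) := by rw [hβdef, cos_angle, huy]
  have cosγ : Real.cos γ = p / (a * b) := by rw [hγdef, cos_angle]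
  have sinα : Real.sin α = S / (a * N) := by
    have h := sin_angle_mul_norm_mul_norm x (x + y)
    rw [hxx, huu, hxu] at h
    have e : a ^ 2 * N ^ 2 - (a ^ 2 + p) * (a ^ 2 + p) = a ^ 2 * b ^ 2 - p ^ 2 := by
      linear_combination a ^ 2 * hN2
    rw [e] at h
    field_simp at h ⊢
    linarith [h]
  have sinβ : Real.sin β = S / (N * b) := by
    have h := sin_angle_mul_norm_mul_norm (x + y) y
    rw [huu, hyy, huy] at h
    have e : N ^ 2 * b ^ 2 - (p + b ^ 2) * (p + b ^ 2) = a ^ 2 * b ^ 2 - p ^ 2 := by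
      linear_combination b ^ 2 * hN2
    rw [e] at h
    field_simp at h ⊢
    linarith [h]
  have sinγ : Real.sin γ = S / (a * b) := by
    have h := sin_angle_mul_norm_mul_norm x y
    rw [hxx, hyy] at h
    have e : a ^ 2 * b ^ 2 - p * p = a ^ 2 * b ^ 2 - p ^ 2 := by ring
    rw [e] at h
    field_simp at h ⊢
    linarith [h]
  have haN : (a * N) ≠ 0 := by positivity
  have hNb : (N * b) ≠ 0 := by positivity
  have hab : (a * b) ≠ 0 := by positivity
  have hN2ne : (N:ℝ) ^ 2 ≠ 0 := by positivity
  have hcosab : Real.cos (α + β) = Real.cos γ := by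
    rw [Real.cos_add, cosα, cosβ, sinα, sinβ, cosγ]
    have e1 : (a ^ 2 + p) / (a * N) * ((p + b ^ 2) / (N * b)) - S / (a * N) * (S / (N * b))
        = ((a ^ 2 + p) * (p + b ^ 2) - S ^ 2) / (a * b * N ^ 2) := by
      field_simp
    rw [e1, hSS]
    have e2 : (a ^ 2 + p) * (p + b ^ 2) - (a ^ 2 * b ^ 2 - p ^ 2) = p * N ^ 2 := by
      linear_combination -p * hN2
    rw [e2]
    rw [mul_comm (a * b) (N ^ 2), mul_comm p (N ^ 2), mul_div_mul_left _ _ hN2ne]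
  have hsinab : Real.sin (α + β) = Real.sin γ := by
    rw [Real.sin_add, sinα, sinβ, cosα, cosβ, sinγ]
    have e1 : S / (a * N) * ((p + b ^ 2) / (N * b)) + (a ^ 2 + p) / (a * N) * (S / (N * b))
        = (S * (a ^ 2 + 2 * p + b ^ 2)) / (a * b * N ^ 2) := by
      field_simp
      ring
    rw [e1, ← hN2]
    rw [mul_comm (a * b) (N ^ 2), mul_comm S (N ^ 2), mul_div_mul_left _ _ hN2ne]
  have hα01 : 0 ≤ α := angle_nonneg _ _
  have hβ01 : 0 ≤ β := angle_nonneg _ _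
  have hαpi : α ≤ π := angle_le_pi _ _
  have hβpi : β ≤ π := angle_le_pi _ _
  have hγ0 : 0 ≤ γ := angle_nonneg _ _
  have hγpi : γ ≤ π := angle_le_pi _ _
  have hle : α + β ≤ π := by
    by_contra hgt
    push_neg at hgt
    rcases lt_or_eq_of_le (show α + β ≤ 2 * π by linarith) with h2 | h2
    · have hs : Real.sin (α + β) < 0 := by
        have h3 : Real.sin (α + β - π) > 0 :=
          Real.sin_pos_of_pos_of_lt_pi (by linarith) (by linarith)
        rw [Real.sin_sub_pi] at h3
        linarith
      have : 0 ≤ Real.sin γ := Real.sin_nonneg_of_nonneg_of_le_pi hγ0 hγpi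
      linarith [hsinab]
    · have hα : α = π := by linarith
      have hβ : β = π := by linarith
      rw [hα, Real.cos_pi] at cosα
      rw [hβ, Real.cos_pi] at cosβ
      rw [eq_div_iff haN] at cosα
      rw [eq_div_iff hNb] at cosβ
      have e3 : a ^ 2 + p = -(a * N) := by linarith
      have e4 : p + b ^ 2 = -(N * b) := by linarith
      have e5 : N * (N + a + b) = 0 := by linear_combination hN2 + e3 + e4
      have e6 : 0 < N * (N + a + b) := mul_pos hN (by linarith)
      linarith
  by_contra hlt
  push_neg at hlt
  have h1 : Real.cos (α + β) < Real.cos γ := by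
    apply Real.strictAntiOn_cos ⟨hγ0, hγpi⟩ ⟨by linarith, hle⟩ hlt
  linarith [hcosab]

/-! ### Polygonal turning -/

noncomputable def pathA : V → List V → ℝ
  | _, [] => 0
  | a, b :: l => angle a b + pathA b l

noncomputable def cycA : List V → ℝ
  | [] => 0
  | x :: l => pathA x (l ++ [x])

lemma pathA_nil (a : V) : pathA a [] = 0 := rfl

lemma pathA_cons (a b : V) (l : List V) : pathA a (b :: l) = angle a b + pathA b l := rfl

lemma pathA_append_single (l : List V) : ∀ a z : V,
    pathA a (l ++ [z]) = pathA a l + angle (l.getLastD a) z := by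
  induction l with
  | nil => intro a z; simp [pathA_nil, pathA_cons]
  | cons b l ih =>
    intro a z
    rw [List.cons_append, pathA_cons, ih b z, pathA_cons, List.getLastD_cons]
    ring

lemma angle_le_pathA (l : List V) : ∀ a z : V, angle a z ≤ pathA a (l ++ [z]) := by
  induction l with
  | nil => intro a z; simp [pathA_cons, pathA_nil]
  | cons b l ih =>
    intro a z
    rw [List.cons_append, pathA_cons]
    calc angle a z ≤ angle a b + angle b z := angle_triangle' a b z
    _ ≤ angle a b + pathA b (l ++ [z]) := by linarith [ih b z]

theorem fenchel_aux : ∀ k : ℕ, ∀ l : List V, l.length ≤ k → l ≠ [] →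
    (∀ x ∈ l, x ≠ 0) → l.sum = 0 → 2 * π ≤ cycA l := by
  intro k
  induction k with
  | zero =>
    intro l hlen hne
    rw [Nat.le_zero, List.length_eq_zero_iff] at hlen
    exact absurd hlen hne
  | succ k IH =>
    rintro l hlen hne hnz hsum
    match l with
    | [] => exact absurd rfl hne
    | [x] =>
      exfalso
      apply hnz x (by simp)
      simpa using hsum
    | [x, y] =>
      have hy : y = -x := by
        have : x + (y + 0) = 0 := hsum
        linear_combination (norm := abel) this
      subst hy
      have hx : x ≠ 0 := hnz x (by simp)
      show 2 * π ≤ pathA x [-x, x]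
      rw [pathA_cons, pathA_cons, pathA_nil,
        angle_self_neg_of_nonzero hx, angle_neg_self_of_nonzero hx]
      ring_nf
      exact le_refl _
    | x :: y :: z :: rest =>
      have hx : x ≠ 0 := hnz x (by simp)
      have hy : y ≠ 0 := hnz y (by simp)
      by_cases hxy : x + y = 0
      · have hyx : y = -x := by linear_combination (norm := abel) hxy
        subst hyx
        show 2 * π ≤ pathA x ((-x :: z :: rest) ++ [x])
        rw [List.cons_append, pathA_cons, angle_self_neg_of_nonzero hx]
        have h2 : angle (-x) x ≤ pathA (-x) ((z :: rest) ++ [x]) := angle_le_pathA _ _ _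
        rw [angle_neg_self_of_nonzero hx] at h2
        linarith
      · have hlen' : ((x + y) :: z :: rest).length ≤ k := by
          simp only [List.length_cons] at hlen ⊢; omega
        have hnz' : ∀ v ∈ (x + y) :: z :: rest, v ≠ 0 := by
          intro v hv
          rcases List.mem_cons.mp hv with h | h
          · subst h; exact hxy
          · exact hnz v (by simp [h])
        have hsum' : ((x + y) :: z :: rest).sum = 0 := by
          have : x + (y + (z :: rest).sum) = 0 := by simpa using hsum
          simpa [add_assoc] using this
        have hIH := IH _ hlen' (by simp) hnz' hsum'
        show 2 * π ≤ pathA x ((y :: z :: rest) ++ [x])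
        have expand1 : pathA x ((y :: z :: rest) ++ [x])
            = angle x y + angle y z + pathA z rest + angle (rest.getLastD z) x := by
          rw [List.cons_append, pathA_cons, List.cons_append, pathA_cons,
            pathA_append_single]
          ring
        have expand2 : cycA ((x + y) :: z :: rest)
            = angle (x + y) z + pathA z rest + angle (rest.getLastD z) (x + y) := by
          show pathA (x + y) ((z :: rest) ++ [x + y]) = _
          rw [List.cons_append, pathA_cons, pathA_append_single]
          ring
        rw [expand1]
        rw [expand2] at hIH
        have t1 := angle_add_le hx hy hxy
        have t2 := angle_triangle' (x + y) y z
        have t3 := angle_triangle' (rest.getLastD z) x (x + y)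
        linarith

/-! ### Dropping zero-weight entries -/

open Classical in
noncomputable def clean : List (V × V) → List (V × V)
  | [] => []
  | p :: l => if p.1 = 0 then clean l else p :: clean l

open Classical in
lemma clean_nil : (clean ([] : List (V × V))) = [] := rfl

open Classical in
lemma clean_cons (p : V × V) (l : List (V × V)) :
    clean (p :: l) = if p.1 = 0 then clean l else p :: clean l := rfl

lemma mem_clean {l : List (V × V)} {p : V × V} (h : p ∈ clean l) : p ∈ l ∧ p.1 ≠ 0 := by
  induction l with
  | nil => simp [clean_nil] at h
  | cons q l ih =>
    rw [clean_cons] at h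
    split_ifs at h with hq
    · exact ⟨List.mem_cons_of_mem _ (ih h).1, (ih h).2⟩
    · rcases List.mem_cons.mp h with h1 | h1
      · subst h1; exact ⟨List.mem_cons_self, hq⟩
      · exact ⟨List.mem_cons_of_mem _ (ih h1).1, (ih h1).2⟩

lemma clean_sum (l : List (V × V)) :
    ((clean l).map Prod.fst).sum = (l.map Prod.fst).sum := by
  induction l with
  | nil => rfl
  | cons q l ih =>
    rw [clean_cons]
    split_ifs with hq
    · simp [hq, ih]
    · simp [ih]

def coup : List (V × V) → V → Prop
  | [], _ => True
  | p :: l, z => (p.1 = 0 → p.2 = ((l.map Prod.snd).headD z)) ∧ coup l z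

lemma pathA_clean (z : V) (hz : z ≠ 0) : ∀ (l : List (V × V)) (a : V),
    coup l z → (∀ p ∈ l, p.2 ≠ 0) →
    pathA a (l.map Prod.snd ++ [z]) = pathA a ((clean l).map Prod.snd ++ [z]) := by
  intro l
  induction l with
  | nil => intro a _ _; rfl
  | cons p l ih =>
    rintro a ⟨h1, h2⟩ hnz
    rw [clean_cons]
    split_ifs with hp
    · have hu : p.2 = (l.map Prod.snd).headD z := h1 hp
      have step : pathA a ((p :: l).map Prod.snd ++ [z]) = pathA a (l.map Prod.snd ++ [z]) := by
        cases l with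
        | nil =>
          simp only [List.map_cons, List.map_nil, List.headD] at hu ⊢
          rw [hu]
          simp [pathA_cons, pathA_nil, angle_self hz]
        | cons q m =>
          simp only [List.map_cons, List.headD_cons] at hu
          simp only [List.map_cons, List.cons_append, pathA_cons]
          rw [hu, angle_self (hnz q (by simp))]
          ring
      rw [step]
      exact ih a h2 (fun q hq => hnz q (List.mem_cons_of_mem _ hq))
    · simp only [List.map_cons, List.cons_append, pathA_cons]
      rw [ih p.2 h2 (fun q hq => hnz q (List.mem_cons_of_mem _ hq))]

lemma pathA_smul : ∀ (l : List (V × V)) (a a' z z' : V),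
    (∀ p ∈ l, ∃ c : ℝ, 0 < c ∧ p.1 = c • p.2) →
    (∃ c : ℝ, 0 < c ∧ a = c • a') → (∃ c : ℝ, 0 < c ∧ z = c • z') →
    pathA a (l.map Prod.fst ++ [z]) = pathA a' (l.map Prod.snd ++ [z']) := by
  intro l
  induction l with
  | nil =>
    rintro a a' z z' _ ⟨c, hc, rfl⟩ ⟨e, he, rfl⟩
    simp only [List.map_nil, List.nil_append, pathA_cons, pathA_nil]
    rw [angle_smul_left_of_pos _ _ hc, angle_smul_right_of_pos _ _ he]
  | cons p l ih =>
    rintro a a' z z' hl ⟨c, hc, rfl⟩ hz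
    simp only [List.map_cons, List.cons_append, pathA_cons]
    obtain ⟨e, he, hp⟩ := hl p (by simp)
    rw [ih p.1 p.2 z z' (fun q hq => hl q (List.mem_cons_of_mem _ hq)) ⟨e, he, hp⟩ hz]
    rw [angle_smul_left_of_pos _ _ hc, hp, angle_smul_right_of_pos _ _ he]

/-! ### Range lists -/

lemma path_of_range (φ : ℕ → V) : ∀ (k s : ℕ),
    pathA (φ s) ((List.range' (s + 1) k).map φ ++ [φ (s + 1 + k)])
      = ∑ m ∈ Finset.range (k + 1), angle (φ (s + m)) (φ (s + m + 1)) := by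
  intro k
  induction k with
  | zero =>
    intro s
    simp [pathA_cons, pathA_nil]
  | succ k ih =>
    intro s
    rw [List.range'_succ, List.map_cons, List.cons_append, pathA_cons]
    have e1 : s + 1 + (k + 1) = (s + 1) + 1 + k := by ring
    rw [e1, ih (s + 1)]
    conv_rhs => rw [Finset.sum_range_succ']
    have e5 : ∀ x : ℕ, s + 1 + x = s + (x + 1) := fun x => by omega
    have e6 : ∀ x : ℕ, s + 1 + x + 1 = s + (x + 1) + 1 := fun x => by omega
    simp only [e5, e6, add_zero]
    ring

lemma coup_range (ψ : ℕ → V) (φ : ℕ → V) (h : ∀ m, ψ m = 0 → φ m = φ (m + 1)) :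
    ∀ (k s : ℕ), coup ((List.range' s k).map (fun m => (ψ m, φ m))) (φ (s + k)) := by
  intro k
  induction k with
  | zero => intro s; trivial
  | succ k ih =>
    intro s
    rw [List.range'_succ, List.map_cons]
    refine ⟨fun h0 => ?_, ?_⟩
    · cases k with
      | zero => simpa using h s h0
      | succ j =>
        rw [List.range'_succ]
        simpa using h s h0
    · have := ih (s + 1)
      have e : s + 1 + k = s + (k + 1) := by ring
      rwa [e] at this

lemma sum_range'_map (ψ : ℕ → V) : ∀ (k s : ℕ),
    ((List.range' s k).map ψ).sum = ∑ m ∈ Finset.range k, ψ (s + m) := by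
  intro k
  induction k with
  | zero => intro s; simp
  | succ k ih =>
    intro s
    rw [List.range'_succ, List.map_cons, List.sum_cons, ih (s + 1)]
    conv_rhs => rw [Finset.sum_range_succ']
    simp only [add_zero]
    have e : ∀ m : ℕ, s + 1 + m = s + (m + 1) := fun m => by omega
    simp only [e]
    exact add_comm _ _

lemma zmod_sum_eq {M : Type*} [AddCommMonoid M] (n : ℕ) [NeZero n] (i₀ : ZMod n) (F : ZMod n → M) :
    ∑ i : ZMod n, F i = ∑ m ∈ Finset.range n, F (i₀ + (m : ZMod n)) := by
  refine Finset.sum_nbij' (fun a => (a - i₀).val) (fun m => i₀ + (m : ZMod n)) ?_ ?_ ?_ ?_ ?_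
  · intro a _
    exact Finset.mem_range.mpr (ZMod.val_lt _)
  · intro m _
    exact Finset.mem_univ _
  · intro a _
    show i₀ + (((a - i₀).val : ℕ) : ZMod n) = a
    rw [ZMod.natCast_rightInverse (a - i₀)]
    abel
  · intro m hm
    show (i₀ + (m : ZMod n) - i₀).val = m
    rw [add_sub_cancel_left, ZMod.val_cast_of_lt (Finset.mem_range.mp hm)]
  · intro a _
    show F a = F (i₀ + (((a - i₀).val : ℕ) : ZMod n))
    rw [ZMod.natCast_rightInverse (a - i₀)]
    congr 1
    abel

theorem fenchel_zmod (n : ℕ) [NeZero n] (w : ZMod n → ℝ) (u : ZMod n → V)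
    (hu : ∀ i, ‖u i‖ = 1) (hw : ∀ i, 0 ≤ w i) (hex : ∃ i, w i ≠ 0)
    (hcoup : ∀ i, w i = 0 → u i = u (i + 1))
    (hsum : ∑ i : ZMod n, w i • u i = 0) :
    2 * π ≤ ∑ i : ZMod n, angle (u i) (u (i + 1)) := by
  obtain ⟨i₀, hi₀⟩ := hex
  have hn1 : 1 ≤ n := Nat.one_le_iff_ne_zero.mpr (NeZero.ne n)
  set φ : ℕ → V := fun m => u (i₀ + (m : ZMod n)) with hφ
  set ψ : ℕ → V := fun m => w (i₀ + (m : ZMod n)) • u (i₀ + (m : ZMod n)) with hψ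
  have hφnz : ∀ m, φ m ≠ 0 := by
    intro m h0
    have := hu (i₀ + (m : ZMod n))
    rw [show u (i₀ + (m : ZMod n)) = φ m from rfl, h0] at this
    simp at this
  have hφn : φ n = φ 0 := by
    rw [hφ]
    simp [ZMod.natCast_self]
  have hψφ : ∀ m, ψ m = 0 → φ m = φ (m + 1) := by
    intro m h0
    rcases smul_eq_zero.mp h0 with h | h
    · have := hcoup _ h
      rw [hφ]
      simp only []
      rw [this]
      congr 1
      push_cast
      ring
    · exact absurd h (hφnz m)
  have hψ0 : ψ 0 ≠ 0 := by
    rw [hψ]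
    simp only [Nat.cast_zero, add_zero]
    exact smul_ne_zero hi₀ (fun h => by simpa [h] using hu i₀)
  set l : List (V × V) := (List.range' 1 (n - 1)).map (fun m => (ψ m, φ m)) with hl
  have hlsnd : l.map Prod.snd = (List.range' 1 (n - 1)).map φ := by
    rw [hl, List.map_map]
    rfl
  -- the angle sum equals a path
  have hpath : ∑ i : ZMod n, angle (u i) (u (i + 1))
      = pathA (φ 0) (l.map Prod.snd ++ [φ 0]) := by
    rw [hlsnd]
    have h0 : (0:ℕ) + 1 + (n - 1) = n := by omega
    have := path_of_range (V := V) φ (n - 1) 0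
    rw [h0] at this
    have hn' : n - 1 + 1 = n := by omega
    rw [hn'] at this
    rw [hφn] at this
    have harng : ∀ m : ℕ, angle (φ m) (φ (m + 1)) = angle (u (i₀ + (m:ZMod n))) (u (i₀ + (m:ZMod n) + 1)) := by
      intro m
      have ec : ((m + 1 : ℕ) : ZMod n) = (m : ZMod n) + 1 := by push_cast; ring
      show angle (u (i₀ + (m : ZMod n))) (u (i₀ + ((m + 1 : ℕ) : ZMod n)))
        = angle (u (i₀ + (m : ZMod n))) (u (i₀ + (m : ZMod n) + 1))
      rw [ec, add_assoc]
    norm_num at this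
    rw [zmod_sum_eq n i₀ (fun i => angle (u i) (u (i + 1)))]
    rw [this]
    apply Finset.sum_congr rfl
    intro m _
    exact (harng m).symm
  -- dezero
  have hcoupl : coup l (φ 0) := by
    have := coup_range ψ φ hψφ (n - 1) 1
    have e : 1 + (n - 1) = n := by omega
    rw [e, hφn] at this
    exact this
  have hsnd_nz : ∀ p ∈ l, p.2 ≠ 0 := by
    intro p hp
    rw [hl] at hp
    obtain ⟨m, _, rfl⟩ := List.mem_map.mp hp
    exact hφnz m
  have hdez : pathA (φ 0) (l.map Prod.snd ++ [φ 0])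
      = pathA (φ 0) ((clean l).map Prod.snd ++ [φ 0]) :=
    pathA_clean (φ 0) (hφnz 0) l (φ 0) hcoupl hsnd_nz
  -- smul transfer
  have hsmul_mem : ∀ p ∈ clean l, ∃ c : ℝ, 0 < c ∧ p.1 = c • p.2 := by
    intro p hp
    obtain ⟨hpl, hp1⟩ := mem_clean hp
    rw [hl] at hpl
    obtain ⟨m, _, rfl⟩ := List.mem_map.mp hpl
    simp only at hp1 ⊢
    have hwm : w (i₀ + (m : ZMod n)) ≠ 0 := by
      intro h0
      apply hp1
      rw [hψ]
      simp [h0]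
    exact ⟨w (i₀ + (m : ZMod n)), lt_of_le_of_ne (hw _) (Ne.symm hwm), rfl⟩
  have hw0pos : 0 < w i₀ := lt_of_le_of_ne (hw i₀) (Ne.symm hi₀)
  have hψ0eq : ψ 0 = w i₀ • φ 0 := by
    rw [hψ, hφ]
    simp
  have hsm : pathA (ψ 0) ((clean l).map Prod.fst ++ [ψ 0])
      = pathA (φ 0) ((clean l).map Prod.snd ++ [φ 0]) :=
    pathA_smul (clean l) (ψ 0) (φ 0) (ψ 0) (φ 0) hsmul_mem
      ⟨w i₀, hw0pos, hψ0eq⟩ ⟨w i₀, hw0pos, hψ0eq⟩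
  -- fenchel
  set X : List V := ψ 0 :: (clean l).map Prod.fst with hX
  have hXsum : X.sum = 0 := by
    rw [hX, List.sum_cons]
    have h1 : ((clean l).map Prod.fst).sum = (l.map Prod.fst).sum := clean_sum l
    have h2 : l.map Prod.fst = (List.range' 1 (n - 1)).map ψ := by
      rw [hl, List.map_map]
      rfl
    rw [h1, h2, sum_range'_map]
    have e : ∀ m : ℕ, 1 + m = m + 1 := fun m => by omega
    simp only [e]
    have hA : ∑ m ∈ Finset.range n, ψ m = 0 := by
      rw [← hsum, zmod_sum_eq n i₀ (fun i => w i • u i)]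
    have hB : ∑ m ∈ Finset.range n, ψ m
        = (∑ m ∈ Finset.range (n - 1), ψ (m + 1)) + ψ 0 := by
      have h3 := Finset.sum_range_succ' ψ (n - 1)
      have e4 : n - 1 + 1 = n := by omega
      rw [e4] at h3
      exact h3
    rw [hB] at hA
    rw [add_comm (ψ 0)]
    exact hA
  have hXnz : ∀ x ∈ X, x ≠ 0 := by
    intro x hx
    rcases List.mem_cons.mp hx with h | h
    · subst h; exact hψ0
    · obtain ⟨p, hp, rfl⟩ := List.mem_map.mp h
      exact (mem_clean hp).2
  have hF := fenchel_aux X.length X le_rfl (by simp [hX]) hXnz hXsum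
  have hcycX : cycA X = pathA (ψ 0) ((clean l).map Prod.fst ++ [ψ 0]) := rfl
  rw [hpath, hdez, ← hsm, ← hcycX]
  exact hF

theorem geo_min (n : ℕ) [NeZero n] (hn : 2 ≤ n) (w : ZMod n → ℝ) (u : ZMod n → V)
    (hu : ∀ i, ‖u i‖ = 1) (hw : ∀ i, 0 ≤ w i) (hex : ∃ i, w i ≠ 0)
    (hcoup : ∀ i, w i = 0 → u i = u (i + 1))
    (hsum : ∑ i : ZMod n, w i • u i = 0) :
    min 1 ((n : ℝ) * (1 - Real.cos (2 * π / n))) ≤ ∑ i : ZMod n, (1 - ⟪u i, u (i + 1)⟫) := by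
  have hterm : ∀ i : ZMod n, 0 ≤ 1 - ⟪u i, u (i + 1)⟫ := by
    intro i
    have h := real_inner_le_norm (u i) (u (i + 1))
    rw [hu i, hu (i + 1)] at h
    linarith
  by_cases hA : ∃ i, ⟪u i, u (i + 1)⟫ ≤ 0
  · obtain ⟨i, hi⟩ := hA
    have h1 : (1:ℝ) ≤ 1 - ⟪u i, u (i + 1)⟫ := by linarith
    have h2 : (1 - ⟪u i, u (i + 1)⟫) ≤ ∑ j : ZMod n, (1 - ⟪u j, u (j + 1)⟫) :=
      Finset.single_le_sum (fun j _ => hterm j) (Finset.mem_univ i)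
    exact le_trans (min_le_left _ _) (le_trans h1 h2)
  · push_neg at hA
    set θ : ZMod n → ℝ := fun i => angle (u i) (u (i + 1)) with hθ
    have hcosθ : ∀ i, Real.cos (θ i) = ⟪u i, u (i + 1)⟫ := fun i =>
      my_cos_angle_unit (hu i) (hu (i + 1))
    have hθ0 : ∀ i, 0 ≤ θ i := fun i => angle_nonneg _ _
    have hθpi2 : ∀ i, θ i ≤ π / 2 := by
      intro i
      by_contra hgt
      push_neg at hgt
      have : Real.cos (θ i) ≤ 0 :=
        Real.cos_nonpos_of_pi_div_two_le_of_le hgt.le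
          (by linarith [angle_le_pi (u i) (u (i + 1)), Real.pi_pos])
      rw [hcosθ i] at this
      linarith [hA i]
    have hF : 2 * π ≤ ∑ i : ZMod n, θ i := fenchel_zmod n w u hu hw hex hcoup hsum
    have hnpos : (0:ℝ) < n := by positivity
    -- Jensen
    have hconv : ConvexOn ℝ (Icc (-(π/2)) (π/2)) (fun x => 1 - Real.cos x) := by
      have h1 := strictConcaveOn_cos_Icc.concaveOn.neg
      have h2 := h1.add_const 1
      convert h2 using 2 with x
      case e'_12 =>
        simp only [Pi.add_apply, Pi.neg_apply]
        ring
      all_goals rfl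
    have hcard : (Fintype.card (ZMod n) : ℝ) = n := by rw [ZMod.card n]
    have hwsum : ∑ _i : ZMod n, (1 / (n:ℝ)) = 1 := by
      rw [Finset.sum_const, Finset.card_univ, ZMod.card n, nsmul_eq_mul]
      field_simp
    have hmem : ∀ i : ZMod n, θ i ∈ Icc (-(π/2)) (π/2) := by
      intro i
      constructor
      · linarith [hθ0 i, Real.pi_pos]
      · exact hθpi2 i
    have hJ := hconv.map_sum_le (t := Finset.univ) (w := fun _ => 1 / (n:ℝ))
      (p := θ) (fun i _ => by positivity) hwsum (fun i _ => hmem i)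
    set θbar : ℝ := ∑ i : ZMod n, (1 / (n:ℝ)) • θ i with hθbar
    have hsmul_div : ∀ g : ZMod n → ℝ, ∑ i : ZMod n, (1 / (n:ℝ)) • g i = (∑ i : ZMod n, g i) / n := by
      intro g
      have e : ∀ i : ZMod n, (1 / (n:ℝ)) • g i = g i / n := fun i => by
        rw [smul_eq_mul]; ring
      simp only [e]
      exact (Finset.sum_div _ _ _).symm
    have hθbar_eq : θbar = (∑ i : ZMod n, θ i) / n := by
      rw [hθbar, hsmul_div]
    have hθbar_lb : 2 * π / n ≤ θbar := by
      rw [hθbar_eq]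
      gcongr
    have hθbar_ub : θbar ≤ π / 2 := by
      rw [hθbar_eq, div_le_iff₀ hnpos]
      have h3 : ∑ i : ZMod n, θ i ≤ (Finset.univ.card : ℕ) • (π / 2) :=
        Finset.sum_le_card_nsmul _ _ _ (fun i _ => hθpi2 i)
      rw [Finset.card_univ, ZMod.card n, nsmul_eq_mul] at h3
      linarith [h3]
    have hsum_eq : ∑ i : ZMod n, (1 - ⟪u i, u (i + 1)⟫)
        = ∑ i : ZMod n, (1 - Real.cos (θ i)) := by
      apply Finset.sum_congr rfl
      intro i _
      rw [hcosθ i]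
    have hJ' : (n:ℝ) * (1 - Real.cos θbar) ≤ ∑ i : ZMod n, (1 - Real.cos (θ i)) := by
      rw [hsmul_div (fun i => 1 - Real.cos (θ i))] at hJ
      rw [le_div_iff₀ hnpos] at hJ
      calc (n:ℝ) * (1 - Real.cos θbar) = (1 - Real.cos θbar) * n := by ring
      _ ≤ _ := hJ
    have hmono : Real.cos θbar ≤ Real.cos (2 * π / n) :=
      Real.cos_le_cos_of_nonneg_of_le_pi (by positivity)
        (le_trans hθbar_ub (by linarith [Real.pi_pos])) hθbar_lb
    calc min 1 ((n : ℝ) * (1 - Real.cos (2 * π / n)))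
        ≤ (n : ℝ) * (1 - Real.cos (2 * π / n)) := min_le_right _ _
    _ ≤ (n : ℝ) * (1 - Real.cos θbar) :=
        mul_le_mul_of_nonneg_left (by linarith) (le_of_lt hnpos)
    _ ≤ ∑ i : ZMod n, (1 - Real.cos (θ i)) := hJ'
    _ = ∑ i : ZMod n, (1 - ⟪u i, u (i + 1)⟫) := hsum_eq.symm

/-! ### Derivative of the norm -/

lemma hasDerivWithinAt_norm' {f : ℝ → V} {f' : V} {s : Set ℝ} {x : ℝ}
    (hf : HasDerivWithinAt f f' s x) (hx : f x ≠ 0) :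
    HasDerivWithinAt (fun y => ‖f y‖) ⟪‖f x‖⁻¹ • f x, f'⟫ s x := by
  have hn : ‖f x‖ ≠ 0 := norm_ne_zero_iff.mpr hx
  have hQ : ⟪f x, f x⟫ ≠ 0 := by
    rw [real_inner_self_eq_norm_mul_norm]
    exact mul_ne_zero hn hn
  have h1 := HasDerivWithinAt.inner ℝ hf hf
  have h2 := (Real.hasDerivAt_sqrt hQ).comp_hasDerivWithinAt x h1
  have heq : ∀ y, Real.sqrt ⟪f y, f y⟫ = ‖f y‖ := fun y => by
    rw [real_inner_self_eq_norm_mul_norm, Real.sqrt_mul_self (norm_nonneg _)]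
  have h3 : HasDerivWithinAt (fun y => ‖f y‖)
      (1 / (2 * Real.sqrt ⟪f x, f x⟫) * (⟪f x, f'⟫ + ⟪f', f x⟫)) s x :=
    h2.congr (fun y _ => (heq y).symm) (heq x).symm
  convert h3 using 1
  rw [real_inner_smul_left, heq x, real_inner_comm f' (f x)]
  field_simp
  ring


end AuxGeometry

/-- **Cyclic pursuit of `n` bugs in `ℝ^d`** with positions `b i t` for `i ∈ ℤ/n`, `t ∈ [0,∞)`:
the unique collection of (piecewise smooth, in particular continuous) curves with the given
initial values such that
(1) whenever `b i t ≠ b (i+1) t`, bug `i` moves with unit velocity straight towards bug `i+1`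
    (the derivative is taken within `[t,∞)`, so that the law of motion makes sense at `t = 0`
    and at the finitely many junction times of the piecewise smooth motion);
(2) bugs that have met stay together;
(3) once all the bugs coincide, they halt. -/
structure IsEuclideanCyclicPursuit (n d : ℕ) (b : ZMod n → ℝ → EuclideanSpace ℝ (Fin d)) :
    Prop where
  cont : ∀ i, ContinuousOn (b i) (Ici 0)
  chase : ∀ (i : ZMod n) (t : ℝ), 0 ≤ t → b i t ≠ b (i + 1) t →
    HasDerivWithinAt (b i) ((‖b (i + 1) t - b i t‖)⁻¹ • (b (i + 1) t - b i t)) (Ici t) t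
  merge : ∀ (i : ZMod n) (t₀ : ℝ), 0 ≤ t₀ → b i t₀ = b (i + 1) t₀ →
    ∀ t, t₀ < t → b i t = b (i + 1) t
  halt : ∀ t₀ : ℝ, 0 ≤ t₀ → (∀ i, b i t₀ = b 0 t₀) → ∀ t, t₀ < t → ∀ i, b i t = b 0 t₀

section Pursuit

variable {n d : ℕ} [NeZero n] {b : ZMod n → ℝ → EuclideanSpace ℝ (Fin d)}

lemma alleq_of_gaps (t : ℝ) (h : ∀ i : ZMod n, b i t = b (i + 1) t) :
    ∀ i, b i t = b 0 t := by
  have key : ∀ m : ℕ, b (m : ZMod n) t = b 0 t := by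
    intro m
    induction m with
    | zero => norm_num
    | succ m ih =>
      have e : ((m + 1 : ℕ) : ZMod n) = (m : ZMod n) + 1 := by push_cast; ring
      rw [e, ← h (m : ZMod n), ih]
  intro i
  have := key i.val
  rwa [ZMod.natCast_rightInverse i] at this

lemma gap_stays (hb : IsEuclideanCyclicPursuit n d b) (i : ZMod n) {t : ℝ} (ht : 0 ≤ t)
    (h : b i t = b (i + 1) t) : ∀ u, t ≤ u → b i u = b (i + 1) u := by
  intro u hu
  rcases eq_or_lt_of_le hu with rfl | hlt
  · exact h
  · exact hb.merge i t ht h u hlt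

lemma pursuit_core (hb : IsEuclideanCyclicPursuit n d b) (hn : 2 ≤ n) (t : ℝ) (ht : 0 ≤ t)
    (hne : ¬ ∀ i, b i t = b 0 t) :
    ∃ D : ℝ, HasDerivWithinAt (fun s => ∑ i : ZMod n, ‖b (i + 1) s - b i s‖) D (Ici t) t ∧
      D ≤ -(min 1 ((n : ℝ) * (1 - Real.cos (2 * π / n)))) := by
  classical
  have hex : ∃ j : ZMod n, b j t ≠ b (j + 1) t := by
    by_contra h
    push_neg at h
    exact hne (alleq_of_gaps t h)
  obtain ⟨j₀, hj₀⟩ := hex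
  have hHex : ∀ i : ZMod n, ∃ m : ℕ, b (i + (m : ZMod n)) t ≠ b (i + (m : ZMod n) + 1) t := by
    intro i
    refine ⟨(j₀ - i).val, ?_⟩
    have e : i + (((j₀ - i).val : ℕ) : ZMod n) = j₀ := by
      rw [ZMod.natCast_rightInverse (j₀ - i)]
      abel
    rw [e]
    exact hj₀
  set find : ZMod n → ℕ := fun i => Nat.find (hHex i) with hfind
  set σ : ZMod n → ZMod n := fun i => i + ((find i : ℕ) : ZMod n) with hσ
  have hσne : ∀ i, b (σ i) t ≠ b (σ i + 1) t := fun i => Nat.find_spec (hHex i)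
  have hσ_eq_self : ∀ i, b i t ≠ b (i + 1) t → σ i = i := by
    intro i h
    have h0 : find i = 0 := by
      rw [hfind]
      rw [Nat.find_eq_zero]
      simpa using h
    show i + ((find i : ℕ) : ZMod n) = i
    rw [h0]
    simp
  have hσ_shift : ∀ i, b i t = b (i + 1) t → σ i = σ (i + 1) := by
    intro i h
    have hf0 : find i ≠ 0 := by
      intro h0
      have hthis := hσne i
      have hσi : σ i = i := by
        show i + ((find i : ℕ) : ZMod n) = i
        rw [h0]
        simp
      rw [hσi] at hthis
      exact hthis h
    obtain ⟨m, hm⟩ := Nat.exists_eq_succ_of_ne_zero hf0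
    have hm_spec : b (i + ((m + 1 : ℕ) : ZMod n)) t ≠ b (i + ((m + 1 : ℕ) : ZMod n) + 1) t := by
      have := Nat.find_spec (hHex i)
      rwa [show Nat.find (hHex i) = m + 1 from hm] at this
    have hshift_eq : ∀ k : ℕ, i + ((k + 1 : ℕ) : ZMod n) = (i + 1) + (k : ZMod n) := by
      intro k
      push_cast
      ring
    have hle : find (i + 1) ≤ m := by
      apply Nat.find_le
      rw [← hshift_eq m]
      exact hm_spec
    have hge : m ≤ find (i + 1) := by
      by_contra hlt
      push_neg at hlt
      have hspec := Nat.find_spec (hHex (i + 1))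
      have hlt2 : find (i + 1) + 1 < m + 1 := by omega
      have := Nat.find_min (hHex i)
        (show find (i + 1) + 1 < Nat.find (hHex i) by
          rw [show Nat.find (hHex i) = find i from rfl, hm]; omega)
      rw [hshift_eq (find (i + 1))] at this
      exact this hspec
    have hfeq : find (i + 1) = m := le_antisymm hle hge
    show i + ((find i : ℕ) : ZMod n) = (i + 1) + ((find (i + 1) : ℕ) : ZMod n)
    rw [hfeq, hm]
    exact hshift_eq m
  have hmerge_chain : ∀ i : ZMod n, ∀ s, t ≤ s → b i s = b (σ i) s := by
    intro i
    suffices h : ∀ m : ℕ, m ≤ find i → ∀ s, t ≤ s → b i s = b (i + (m : ZMod n)) s by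
      intro s hs
      exact h (find i) le_rfl s hs
    intro m
    induction m with
    | zero => intro _ s _; norm_num
    | succ m ih =>
      intro hm s hs
      have hmlt : m < find i := hm
      have hgap : b (i + (m : ZMod n)) t = b (i + (m : ZMod n) + 1) t := by
        have := Nat.find_min (hHex i) hmlt
        rwa [not_not] at this
      have h2 := gap_stays hb (i + (m : ZMod n)) ht hgap s hs
      rw [ih hmlt.le s hs, h2]
      congr 1
      push_cast
      ring
  set vel : ZMod n → EuclideanSpace ℝ (Fin d) :=
    fun i => ‖b (σ i + 1) t - b (σ i) t‖⁻¹ • (b (σ i + 1) t - b (σ i) t) with hvel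
  have hvel_deriv : ∀ i, HasDerivWithinAt (b i) (vel i) (Ici t) t := by
    intro i
    have hchase := hb.chase (σ i) t ht (hσne i)
    exact hchase.congr (fun s hs => hmerge_chain i s hs) (hmerge_chain i t le_rfl)
  have hgapne : ∀ i, b (σ i + 1) t - b (σ i) t ≠ 0 :=
    fun i => sub_ne_zero.mpr (Ne.symm (hσne i))
  have hvel_unit : ∀ i, ‖vel i‖ = 1 := by
    intro i
    rw [hvel]
    simp only []
    rw [norm_smul, norm_inv, norm_norm, inv_mul_cancel₀ (norm_ne_zero_iff.mpr (hgapne i))]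
  set w : ZMod n → ℝ := fun i => ‖b (i + 1) t - b i t‖ with hw
  have hw0 : ∀ i, 0 ≤ w i := fun i => norm_nonneg _
  have hwzero_iff : ∀ i, w i = 0 ↔ b i t = b (i + 1) t := by
    intro i
    rw [hw]
    simp only []
    rw [norm_eq_zero, sub_eq_zero]
    exact ⟨fun h => h.symm, fun h => h.symm⟩
  have hcoupl : ∀ i, w i = 0 → vel i = vel (i + 1) := by
    intro i h
    rw [hvel]
    simp only []
    rw [hσ_shift i ((hwzero_iff i).mp h)]
  have hvel_self : ∀ i, b i t ≠ b (i + 1) t →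
      vel i = (w i)⁻¹ • (b (i + 1) t - b i t) := by
    intro i h
    rw [hvel, hw]
    simp only []
    rw [hσ_eq_self i h]
  have hsum : ∑ i : ZMod n, w i • vel i = 0 := by
    have hterm : ∀ i : ZMod n, w i • vel i = b (i + 1) t - b i t := by
      intro i
      by_cases h : b i t = b (i + 1) t
      · rw [(hwzero_iff i).mpr h]
        rw [show b (i + 1) t - b i t = 0 by rw [h]; abel]
        simp
      · rw [hvel_self i h, smul_smul, mul_inv_cancel₀ (fun h0 => h ((hwzero_iff i).mp h0)),
          one_smul]
    rw [Finset.sum_congr rfl (fun i _ => hterm i)]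
    rw [Finset.sum_sub_distrib]
    rw [Fintype.sum_equiv (Equiv.addRight (1 : ZMod n)) (fun i => b (i + 1) t) (fun i => b i t)
      (fun i => rfl)]
    simp
  have hexw : ∃ i, w i ≠ 0 := ⟨j₀, fun h => hj₀ ((hwzero_iff j₀).mp h)⟩
  -- derivative of each term
  have hterm_deriv : ∀ i : ZMod n, HasDerivWithinAt (fun s => ‖b (i + 1) s - b i s‖)
      (⟪vel i, vel (i + 1)⟫ - 1) (Ici t) t := by
    intro i
    by_cases hzi : b i t = b (i + 1) t
    · have hv : vel i = vel (i + 1) := hcoupl i ((hwzero_iff i).mpr hzi)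
      have hval : ⟪vel i, vel (i + 1)⟫ - 1 = 0 := by
        rw [← hv, real_inner_self_eq_norm_mul_norm, hvel_unit i]
        norm_num
      rw [hval]
      have hstay := gap_stays hb i ht hzi
      apply (hasDerivWithinAt_const t (Ici t) (0:ℝ)).congr
      · intro s hs
        rw [show b (i + 1) s - b i s = 0 by rw [← hstay s hs]; abel]
        simp
      · rw [show b (i + 1) t - b i t = 0 by rw [← hzi]; abel]
        simp
    · have hf : HasDerivWithinAt (fun s => b (i + 1) s - b i s) (vel (i + 1) - vel i) (Ici t) t :=
        (hvel_deriv (i + 1)).sub (hvel_deriv i)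
      have hft : b (i + 1) t - b i t ≠ 0 := sub_ne_zero.mpr (Ne.symm hzi)
      have h4 := hasDerivWithinAt_norm' hf hft
      have hvi : ‖b (i + 1) t - b i t‖⁻¹ • (b (i + 1) t - b i t) = vel i :=
        (hvel_self i hzi).symm
      rw [hvi] at h4
      convert h4 using 1
      rw [inner_sub_right, real_inner_self_eq_norm_mul_norm, hvel_unit i]
      norm_num
  refine ⟨∑ i : ZMod n, (⟪vel i, vel (i + 1)⟫ - 1), ?_, ?_⟩
  · have := HasDerivWithinAt.fun_sum (u := Finset.univ)
      (A := fun i s => ‖b (i + 1) s - b i s‖)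
      (A' := fun i => ⟪vel i, vel (i + 1)⟫ - 1) (fun i _ => hterm_deriv i)
    exact this
  · have hgeo := geo_min n hn w vel hvel_unit hw0 hexw hcoupl hsum
    have : ∑ i : ZMod n, (⟪vel i, vel (i + 1)⟫ - 1)
        = -∑ i : ZMod n, (1 - ⟪vel i, vel (i + 1)⟫) := by
      rw [← Finset.sum_neg_distrib]
      apply Finset.sum_congr rfl
      intro i _
      ring
    rw [this]
    linarith

end Pursuit

/-- For cyclic pursuit of `n` bugs in `ℝ^d`, at any time `t` at which not
all bugs coincide, the total length `l t = ∑_{i ∈ ℤ/n} ‖b (i+1) t - b i t‖` satisfies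
`|l'(t)| ≥ min 1 (n (1 - cos (2π/n)))`.  Consequently, the pursuit ends by time
`l 0 · (min 1 (n (1 - cos (2π/n))))⁻¹` (a bound that grows linearly in `n`):
for all `t` past that time, all bugs sit at the point `b 0 T`, `T` being that time. -/
theorem euclidean_cyclic_pursuit_length_decrease_rate
    (n d : ℕ) [NeZero n] (hn : 2 ≤ n)
    (b : ZMod n → ℝ → EuclideanSpace ℝ (Fin d))
    (hb : IsEuclideanCyclicPursuit n d b) :
    (∀ t : ℝ, 0 ≤ t → ¬ (∀ i, b i t = b 0 t) →
      ∀ l' : ℝ,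
        HasDerivWithinAt (fun u => ∑ i : ZMod n, ‖b (i + 1) u - b i u‖) l' (Ici t) t →
        min 1 ((n : ℝ) * (1 - Real.cos (2 * π / n))) ≤ |l'|) ∧
    (∀ t : ℝ,
      (∑ i : ZMod n, ‖b (i + 1) 0 - b i 0‖) *
          (min 1 ((n : ℝ) * (1 - Real.cos (2 * π / n))))⁻¹ ≤ t →
      ∀ i, b i t =
        b 0 ((∑ i : ZMod n, ‖b (i + 1) 0 - b i 0‖) *
          (min 1 ((n : ℝ) * (1 - Real.cos (2 * π / n))))⁻¹)) := by

  classical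
  set c : ℝ := min 1 ((n : ℝ) * (1 - Real.cos (2 * π / n))) with hc
  have hnpos : (0:ℝ) < n := by positivity
  have hcos1 : Real.cos (2 * π / n) < 1 := by
    have h1 : 0 < 2 * π / n := by positivity
    have h2 : 2 * π / n ≤ π := by
      rw [div_le_iff₀ hnpos]
      nlinarith [Real.pi_pos, (show (2:ℝ) ≤ n by exact_mod_cast hn)]
    have := Real.strictAntiOn_cos (Set.mem_Icc.mpr ⟨le_rfl, Real.pi_pos.le⟩)
      (Set.mem_Icc.mpr ⟨h1.le, h2⟩) h1
    rwa [Real.cos_zero] at this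
  have hcpos : 0 < c := lt_min one_pos (by nlinarith)
  set l : ℝ → ℝ := fun s => ∑ i : ZMod n, ‖b (i + 1) s - b i s‖ with hl
  constructor
  · intro t ht hne l' hl'
    obtain ⟨D, hD, hDle⟩ := pursuit_core hb hn t ht hne
    have hU : UniqueDiffWithinAt ℝ (Ici t) t := uniqueDiffOn_Ici t t Set.self_mem_Ici
    have hl'D : l' = D := by
      rw [← hl'.derivWithin hU, hD.derivWithin hU]
    rw [hl'D]
    calc c ≤ -D := by linarith
    _ ≤ |D| := neg_le_abs D
  · intro t hTt i
    set L0 : ℝ := ∑ i : ZMod n, ‖b (i + 1) 0 - b i 0‖ with hL0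
    set T : ℝ := L0 * c⁻¹ with hT
    have hL0nn : 0 ≤ L0 := Finset.sum_nonneg (fun i _ => norm_nonneg _)
    have hT0 : 0 ≤ T := mul_nonneg hL0nn (inv_nonneg.mpr hcpos.le)
    have hexists : ∃ t₀, 0 ≤ t₀ ∧ t₀ ≤ T ∧ ∀ j, b j t₀ = b 0 t₀ := by
      by_contra hcon
      push_neg at hcon
      have hnall : ∀ s, 0 ≤ s → s ≤ T → ¬ ∀ j, b j s = b 0 s := by
        intro s h1 h2 hall
        obtain ⟨j, hj⟩ := hcon s h1 h2
        exact hj (hall j)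
      have hlcont : ContinuousOn l (Icc 0 T) := by
        apply ContinuousOn.mono (s := Ici 0) ?_ (fun x hx => hx.1)
        apply continuousOn_finset_sum
        intro i _
        exact ((hb.cont (i + 1)).sub (hb.cont i)).norm
      have hder : ∀ x ∈ Ico 0 T, HasDerivWithinAt l (derivWithin l (Ici x) x) (Ici x) x := by
        intro x hx
        obtain ⟨D, hD, _⟩ := pursuit_core hb hn x hx.1 (hnall x hx.1 hx.2.le)
        exact hD.differentiableWithinAt.hasDerivWithinAt
      have hbound : ∀ x ∈ Ico 0 T, derivWithin l (Ici x) x ≤ -c := by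
        intro x hx
        obtain ⟨D, hD, hDle⟩ := pursuit_core hb hn x hx.1 (hnall x hx.1 hx.2.le)
        rw [hD.derivWithin (uniqueDiffOn_Ici x x Set.self_mem_Ici)]
        exact hDle
      have hBder : ∀ x ∈ Ico 0 T, HasDerivWithinAt (fun s => L0 - c * s) (-c) (Ici x) x := by
        intro x _
        have h := (((hasDerivAt_id x).const_mul c).const_sub L0).hasDerivWithinAt (s := Ici x)
        simpa using h
      have hmvt := image_le_of_deriv_right_le_deriv_boundary hlcont hder
        (by simp; exact le_rfl : l 0 ≤ L0 - c * 0)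
        ((continuous_const.sub (continuous_const.mul continuous_id)).continuousOn) hBder hbound
      have hlT : l T ≤ L0 - c * T := hmvt (Set.mem_Icc.mpr ⟨hT0, le_rfl⟩)
      have hcT : c * T = L0 := by
        rw [hT]
        field_simp
      have hlT0 : l T ≤ 0 := by rw [hcT] at hlT; linarith
      have hlTnn : 0 ≤ l T := Finset.sum_nonneg (fun i _ => norm_nonneg _)
      have hterms : ∀ i : ZMod n, b i T = b (i + 1) T := by
        intro i
        have hz := (Finset.sum_eq_zero_iff_of_nonneg
          (fun j (_ : j ∈ Finset.univ) => norm_nonneg (b (j + 1) T - b j T))).mp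
          (le_antisymm hlT0 hlTnn) i (Finset.mem_univ i)
        rw [norm_eq_zero, sub_eq_zero] at hz
        exact hz.symm
      exact hnall T hT0 le_rfl (alleq_of_gaps T hterms)
    obtain ⟨t₀, ht₀0, ht₀T, hall⟩ := hexists
    rcases eq_or_lt_of_le ht₀T with hEq | hLt
    · rw [hEq] at hall
      rcases eq_or_lt_of_le hTt with hEq2 | hLt2
      · rw [← hEq2]
        exact hall i
      · exact hb.halt T hT0 hall t hLt2 i
    · have hbt : ∀ s, t₀ < s → ∀ j, b j s = b 0 t₀ := hb.halt t₀ ht₀0 hall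
      have hb0T : b 0 T = b 0 t₀ := hbt T hLt 0
      have hbit : b i t = b 0 t₀ := hbt t (lt_of_lt_of_le hLt hTt) i
      rw [hbit, hb0T]
end

section
/- For cyclic pursuit of n bugs in the plane ℝ² whose initial positions b_i(0) are the vertices, in cyclic order, of a regular planar n-gon, the time from the start of pursuit until all bugs coincide is exactly l(0)·(n(1 − cos(2π/n)))^{-1}, where l(0) is the perimeter of the n-gon. -/
open Set Filter
open scoped Topology Real

open scoped NNReal

noncomputable section

namespace PursuitAux

abbrev E2 : Type := EuclideanSpace ℝ (Fin 2)

def e0 : E2 := EuclideanSpace.single 0 1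
def e1 : E2 := EuclideanSpace.single 1 1

lemma comb_apply0 (a b : ℝ) : (a • e0 + b • e1) 0 = a := by
  simp [e0, e1, EuclideanSpace.single_apply]

lemma comb_apply1 (a b : ℝ) : (a • e0 + b • e1) 1 = b := by
  simp [e0, e1, EuclideanSpace.single_apply]

lemma norm_comb (a b : ℝ) : ‖a • e0 + b • e1‖ = Real.sqrt (a ^ 2 + b ^ 2) := by
  rw [EuclideanSpace.norm_eq]
  congr 1
  rw [Fin.sum_univ_two]
  rw [comb_apply0, comb_apply1]
  simp [sq_abs]

def wv (y : ℝ) : E2 := (-Real.sin y) • e0 + Real.cos y • e1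

lemma norm_wv (y : ℝ) : ‖wv y‖ = 1 := by
  rw [wv, norm_comb, neg_sq, Real.sin_sq_add_cos_sq]
  exact Real.sqrt_one

def rad (n : ℕ) (R t : ℝ) : ℝ := R - Real.sin (π / n) * t

def th (n : ℕ) (R φ t : ℝ) : ℝ :=
  φ + (Real.cos (π / n) / Real.sin (π / n)) * (Real.log R - Real.log (rad n R t))

def pos (c : E2) (n : ℕ) (R φ m t : ℝ) : E2 :=
  c + (rad n R t * Real.cos (m + th n R φ t)) • e0
    + (rad n R t * Real.sin (m + th n R φ t)) • e1

lemma hasDerivAt_rad (n : ℕ) (R t : ℝ) :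
    HasDerivAt (rad n R) (-Real.sin (π / n)) t := by
  have h : HasDerivAt (fun x => R - Real.sin (π / n) * x) (-Real.sin (π / n)) t := by
    simpa using ((hasDerivAt_id t).const_mul (Real.sin (π / n))).const_sub R
  exact h

lemma hasDerivAt_th (n : ℕ) {R t : ℝ} (φ : ℝ) (hs : Real.sin (π / n) ≠ 0)
    (hrad : rad n R t ≠ 0) :
    HasDerivAt (th n R φ) (Real.cos (π / n) / rad n R t) t := by
  have hlog : HasDerivAt (fun t => Real.log (rad n R t))
      (-Real.sin (π / n) / rad n R t) t := (hasDerivAt_rad n R t).log hrad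
  have := (((hlog.const_sub (Real.log R)).const_mul
      (Real.cos (π / n) / Real.sin (π / n))).const_add φ)
  have h2 : HasDerivAt (th n R φ) _ t := this
  convert h2 using 1
  field_simp

lemma hasDerivAt_pos (c : E2) (n : ℕ) {R t : ℝ} (φ m : ℝ) (hs : Real.sin (π / n) ≠ 0)
    (hrad : rad n R t ≠ 0) :
    HasDerivAt (pos c n R φ m) (wv (m + th n R φ t + π / n)) t := by
  set h := Real.sin (π / n) with hh
  set k := Real.cos (π / n) with hk
  have hu : HasDerivAt (fun t => m + th n R φ t) (k / rad n R t) t :=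
    (hasDerivAt_th n φ hs hrad).const_add m
  have hcos : HasDerivAt (fun t => rad n R t * Real.cos (m + th n R φ t))
      (-h * Real.cos (m + th n R φ t) +
        rad n R t * (-Real.sin (m + th n R φ t) * (k / rad n R t))) t :=
    (hasDerivAt_rad n R t).mul hu.cos
  have hsin : HasDerivAt (fun t => rad n R t * Real.sin (m + th n R φ t))
      (-h * Real.sin (m + th n R φ t) +
        rad n R t * (Real.cos (m + th n R φ t) * (k / rad n R t))) t :=
    (hasDerivAt_rad n R t).mul hu.sin
  have := ((hcos.smul_const e0).const_add c).add (hsin.smul_const e1)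
  have c1 : ∀ u : ℝ, -h * Real.cos u + rad n R t * (-Real.sin u * (k / rad n R t))
      = -Real.sin (u + π / n) := by
    intro u; rw [Real.sin_add, ← hh, ← hk]; field_simp; ring
  have c2 : ∀ u : ℝ, -h * Real.sin u + rad n R t * (Real.cos u * (k / rad n R t))
      = Real.cos (u + π / n) := by
    intro u; rw [Real.cos_add, ← hh, ← hk]; field_simp; ring
  rw [c1, c2] at this
  exact this

lemma pos_sub (c : E2) (n : ℕ) (R φ m t : ℝ) :
    pos c n R φ (m + 2 * π / n) t - pos c n R φ m t
      = (2 * rad n R t * Real.sin (π / n)) • wv (m + th n R φ t + π / n) := by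
  set u := m + th n R φ t with hu
  have hcc : Real.cos (m + 2 * π / n + th n R φ t) - Real.cos u
      = -2 * Real.sin (u + π / n) * Real.sin (π / n) := by
    rw [Real.cos_sub_cos, hu]
    ring_nf
  have hss : Real.sin (m + 2 * π / n + th n R φ t) - Real.sin u
      = 2 * Real.sin (π / n) * Real.cos (u + π / n) := by
    rw [Real.sin_sub_sin, hu]
    ring_nf
  ext j
  fin_cases j <;>
    simp only [pos, wv, PiLp.sub_apply, PiLp.add_apply, PiLp.smul_apply, smul_eq_mul] <;>
    simp only [e0, e1, EuclideanSpace.single_apply] <;>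
    norm_num
  · linear_combination rad n R t * hcc
  · linear_combination rad n R t * hss

lemma sin_pi_div_pos {n : ℕ} (hn : 2 ≤ n) : 0 < Real.sin (π / n) := by
  have hn0 : (0:ℝ) < n := by positivity
  apply Real.sin_pos_of_pos_of_lt_pi
  · positivity
  · have : (1:ℝ) < n := by exact_mod_cast lt_of_lt_of_le one_lt_two hn
    rw [div_lt_iff₀ hn0]
    nlinarith [Real.pi_pos]

lemma norm_pos_sub (c : E2) (n : ℕ) {R t : ℝ} (φ m : ℝ) (hrad : 0 ≤ rad n R t)
    (hs : 0 ≤ Real.sin (π / n)) :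
    ‖pos c n R φ (m + 2 * π / n) t - pos c n R φ m t‖
      = 2 * rad n R t * Real.sin (π / n) := by
  rw [pos_sub, norm_smul, norm_wv, mul_one, Real.norm_eq_abs, abs_of_nonneg (by positivity)]

lemma pos_sub_normalized (c : E2) (n : ℕ) {R t : ℝ} (φ m : ℝ) (hrad : 0 < rad n R t)
    (hs : 0 < Real.sin (π / n)) :
    ‖pos c n R φ (m + 2 * π / n) t - pos c n R φ m t‖⁻¹
        • (pos c n R φ (m + 2 * π / n) t - pos c n R φ m t)
      = wv (m + th n R φ t + π / n) := by
  rw [norm_pos_sub c n φ m hrad.le hs.le, pos_sub, smul_smul,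
    inv_mul_cancel₀ (by positivity), one_smul]

/-- The pursuit vector field. -/
def Fv (n : ℕ) (x : ZMod n → E2) : ZMod n → E2 :=
  fun i => ‖x (i + 1) - x i‖⁻¹ • (x (i + 1) - x i)

/-- The set of configurations with all consecutive distances at least `δ`. -/
def safe (n : ℕ) (δ : ℝ) : Set (ZMod n → E2) := {x | ∀ i, δ ≤ ‖x (i + 1) - x i‖}

lemma normalize_lip {δ : ℝ} (hδ : 0 < δ) (u v : E2) (hu : δ ≤ ‖u‖) (hv : δ ≤ ‖v‖) :
    ‖‖u‖⁻¹ • u - ‖v‖⁻¹ • v‖ ≤ 2 / δ * ‖u - v‖ := by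
  have hu0 : 0 < ‖u‖ := lt_of_lt_of_le hδ hu
  have hv0 : 0 < ‖v‖ := lt_of_lt_of_le hδ hv
  have hsplit : ‖u‖⁻¹ • u - ‖v‖⁻¹ • v
      = ‖u‖⁻¹ • (u - v) + (‖u‖⁻¹ - ‖v‖⁻¹) • v := by
    rw [sub_smul, smul_sub]; abel
  have h1 : ‖‖u‖⁻¹ • (u - v)‖ ≤ δ⁻¹ * ‖u - v‖ := by
    rw [norm_smul, Real.norm_eq_abs, abs_of_pos (inv_pos.2 hu0)]
    gcongr
  have h2 : ‖(‖u‖⁻¹ - ‖v‖⁻¹) • v‖ ≤ δ⁻¹ * ‖u - v‖ := by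
    rw [norm_smul, Real.norm_eq_abs]
    have heq : ‖u‖⁻¹ - ‖v‖⁻¹ = (‖v‖ - ‖u‖) / (‖u‖ * ‖v‖) := by
      field_simp
    rw [heq, abs_div, abs_of_pos (mul_pos hu0 hv0)]
    have hnd : |‖v‖ - ‖u‖| ≤ ‖u - v‖ := by
      rw [norm_sub_rev u v]; exact abs_norm_sub_norm_le v u
    calc |‖v‖ - ‖u‖| / (‖u‖ * ‖v‖) * ‖v‖ = |‖v‖ - ‖u‖| / ‖u‖ := by
          field_simp
      _ ≤ ‖u - v‖ / δ := by
          apply div_le_div₀ (norm_nonneg _) hnd hδ hu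
      _ = δ⁻¹ * ‖u - v‖ := by rw [div_eq_inv_mul]
  calc ‖‖u‖⁻¹ • u - ‖v‖⁻¹ • v‖ ≤ ‖‖u‖⁻¹ • (u - v)‖ + ‖(‖u‖⁻¹ - ‖v‖⁻¹) • v‖ := by
        rw [hsplit]; exact norm_add_le _ _
    _ ≤ δ⁻¹ * ‖u - v‖ + δ⁻¹ * ‖u - v‖ := add_le_add h1 h2
    _ = 2 / δ * ‖u - v‖ := by rw [div_eq_mul_inv]; ring

lemma Fv_lipschitz (n : ℕ) [NeZero n] {δ : ℝ} (hδ : 0 < δ) :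
    LipschitzOnWith (⟨4 / δ, by positivity⟩ : ℝ≥0) (Fv n) (safe n δ) := by
  apply LipschitzOnWith.of_dist_le_mul
  intro x hx y hy
  show dist (Fv n x) (Fv n y) ≤ 4 / δ * dist x y
  rw [dist_pi_le_iff (by positivity)]
  intro i
  rw [dist_eq_norm]
  have hxd := hx i
  have hyd := hy i
  have hdiff : ‖(x (i+1) - x i) - (y (i+1) - y i)‖ ≤ 2 * dist x y := by
    calc ‖(x (i+1) - x i) - (y (i+1) - y i)‖
        = ‖(x (i+1) - y (i+1)) - (x i - y i)‖ := by congr 1; abel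
      _ ≤ ‖x (i+1) - y (i+1)‖ + ‖x i - y i‖ := norm_sub_le _ _
      _ = dist (x (i+1)) (y (i+1)) + dist (x i) (y i) := by
          rw [dist_eq_norm, dist_eq_norm]
      _ ≤ dist x y + dist x y := add_le_add (dist_le_pi_dist x y _) (dist_le_pi_dist x y _)
      _ = 2 * dist x y := by ring
  calc ‖Fv n x i - Fv n y i‖ ≤ 2 / δ * ‖(x (i+1) - x i) - (y (i+1) - y i)‖ :=
        normalize_lip hδ _ _ hxd hyd
    _ ≤ 2 / δ * (2 * dist x y) := by gcongr
    _ = 4 / δ * dist x y := by ring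

lemma pos_period (c : E2) (n : ℕ) (R φ m t : ℝ) :
    pos c n R φ (m + 2 * π) t = pos c n R φ m t := by
  unfold pos
  rw [show m + 2 * π + th n R φ t = m + th n R φ t + 2 * π by ring,
    Real.cos_add_two_pi, Real.sin_add_two_pi]

lemma pos_succ (c : E2) (n : ℕ) [NeZero n] (hn : 2 ≤ n) (R φ t : ℝ) (i : ZMod n) :
    pos c n R φ (2 * π * ((i + 1).val : ℝ) / n) t
      = pos c n R φ (2 * π * (i.val : ℝ) / n + 2 * π / n) t := by
  have hn0 : (0:ℝ) < n := by
    have := NeZero.pos n; positivity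
  have h1n : 1 < n := hn
  have hval : ((i + 1).val : ℕ) = (i.val + 1) % n := by
    rw [ZMod.val_add, ZMod.val_one_eq_one_mod, Nat.mod_eq_of_lt h1n]
  have hlt : i.val < n := ZMod.val_lt i
  rcases lt_or_eq_of_le (Nat.succ_le_of_lt hlt) with hcase | hcase
  · -- i.val + 1 < n
    have : ((i + 1).val : ℕ) = i.val + 1 := by rw [hval, Nat.mod_eq_of_lt hcase]
    rw [this]
    congr 1
    push_cast
    field_simp
  · -- i.val + 1 = n
    have hv0 : ((i + 1).val : ℕ) = 0 := by
      have h2 : i.val + 1 = n := hcase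
      rw [hval, h2, Nat.mod_self]
    rw [hv0]
    have hang : 2 * π * (i.val : ℝ) / n + 2 * π / n = 0 + 2 * π := by
      have hiv : ((i.val : ℝ) + 1) = n := by exact_mod_cast hcase
      rw [zero_add, show 2 * π * (i.val : ℝ) / n + 2 * π / n
          = 2 * π * ((i.val : ℝ) + 1) / n by ring, hiv,
        mul_div_assoc, div_self hn0.ne', mul_one]
    rw [hang, pos_period]
    norm_num

lemma Fv_pos (c : E2) (n : ℕ) [NeZero n] (hn : 2 ≤ n) {R t : ℝ} (φ : ℝ)
    (hrad : 0 < rad n R t) (i : ZMod n) :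
    Fv n (fun j => pos c n R φ (2 * π * (j.val : ℝ) / n) t) i
      = wv (2 * π * (i.val : ℝ) / n + th n R φ t + π / n) := by
  have hs := sin_pi_div_pos hn
  simp only [Fv]
  rw [pos_succ c n hn R φ t i]
  exact pos_sub_normalized c n φ _ hrad hs

lemma rad_zero (n : ℕ) (R : ℝ) : rad n R 0 = R := by simp [rad]

lemma th_zero (n : ℕ) (R φ : ℝ) : th n R φ 0 = φ := by
  unfold th rad
  norm_num

lemma pos_zero (c : E2) (n : ℕ) (R φ m : ℝ) :
    pos c n R φ m 0 = c + (R * Real.cos (m + φ)) • e0 + (R * Real.sin (m + φ)) • e1 := by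
  simp only [pos, rad_zero, th_zero]

lemma pos_dist_center (c : E2) (n : ℕ) (R φ m t : ℝ) :
    ‖pos c n R φ m t - c‖ = |rad n R t| := by
  unfold pos
  have : c + (rad n R t * Real.cos (m + th n R φ t)) • e0
      + (rad n R t * Real.sin (m + th n R φ t)) • e1 - c
      = (rad n R t * Real.cos (m + th n R φ t)) • e0
      + (rad n R t * Real.sin (m + th n R φ t)) • e1 := by abel
  rw [this, norm_comb]
  rw [show (rad n R t * Real.cos (m + th n R φ t)) ^ 2
      + (rad n R t * Real.sin (m + th n R φ t)) ^ 2 = (rad n R t) ^ 2 by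
    nlinarith [Real.sin_sq_add_cos_sq (m + th n R φ t)]]
  exact Real.sqrt_sq_eq_abs _

lemma rad_anti (n : ℕ) (R : ℝ) {s t : ℝ} (hst : s ≤ t) (hs : 0 ≤ Real.sin (π / n)) :
    rad n R t ≤ rad n R s := by
  unfold rad
  nlinarith

lemma rad_pos (n : ℕ) {R t : ℝ} (hs : 0 < Real.sin (π / n))
    (ht : t < R / Real.sin (π / n)) : 0 < rad n R t := by
  unfold rad
  rw [lt_div_iff₀ hs] at ht
  nlinarith

end PursuitAux

end

open PursuitAux

/-- For cyclic pursuit of `n` bugs in the plane `ℝ²` whose initial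
positions are the vertices, in cyclic order, of a regular planar `n`-gon (with center `c`,
circumradius `R > 0` and phase `φ`), the time from the start of pursuit until all bugs
coincide is exactly `T = l(0) · (n (1 - cos (2π/n)))⁻¹`, where `l(0)` is the perimeter:
all bugs coincide at time `T`, and at no earlier time `t ∈ [0, T)` do they all coincide. -/
theorem regular_ngon_pursuit_capture_time
    (n : ℕ) [NeZero n] (hn : 2 ≤ n)
    (b : ZMod n → ℝ → EuclideanSpace ℝ (Fin 2))
    (hb : IsEuclideanCyclicPursuit n 2 b)
    (c : EuclideanSpace ℝ (Fin 2)) (R φ : ℝ) (hR : 0 < R)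
    (hinit : ∀ i : ZMod n, b i 0 = c
        + (R * Real.cos (2 * π * (i.val : ℝ) / n + φ)) • EuclideanSpace.single (0 : Fin 2) (1 : ℝ)
        + (R * Real.sin (2 * π * (i.val : ℝ) / n + φ)) • EuclideanSpace.single (1 : Fin 2) (1 : ℝ)) :
    (∀ i, b i ((∑ i : ZMod n, ‖b (i + 1) 0 - b i 0‖) * ((n : ℝ) * (1 - Real.cos (2 * π / n)))⁻¹)
        = b 0 ((∑ i : ZMod n, ‖b (i + 1) 0 - b i 0‖) * ((n : ℝ) * (1 - Real.cos (2 * π / n)))⁻¹)) ∧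
    (∀ t : ℝ, 0 ≤ t →
      t < (∑ i : ZMod n, ‖b (i + 1) 0 - b i 0‖) * ((n : ℝ) * (1 - Real.cos (2 * π / n)))⁻¹ →
      ¬ ∀ i, b i t = b 0 t) := by
  have hs : 0 < Real.sin (π / n) := sin_pi_div_pos hn
  have hn0 : (0:ℝ) < n := by have := NeZero.pos n; positivity
  have hT0 : 0 < R / Real.sin (π / n) := div_pos hR hs
  set T := R / Real.sin (π / n) with hT
  -- initial condition in `pos` form
  have hinit' : ∀ i : ZMod n, b i 0 = pos c n R φ (2 * π * (i.val : ℝ) / n) 0 := by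
    intro i
    rw [pos_zero]
    simpa only [e0, e1] using hinit i
  -- the statement's time expression equals T
  have hsum : (∑ i : ZMod n, ‖b (i + 1) 0 - b i 0‖) = n * (2 * R * Real.sin (π / n)) := by
    have hterm : ∀ i : ZMod n, ‖b (i + 1) 0 - b i 0‖ = 2 * R * Real.sin (π / n) := by
      intro i
      rw [hinit' (i+1), hinit' i, pos_succ c n hn R φ 0 i,
        norm_pos_sub c n φ _ (by rw [rad_zero]; exact hR.le) hs.le, rad_zero]
    rw [Finset.sum_congr rfl (fun i _ => hterm i), Finset.sum_const, Finset.card_univ,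
      ZMod.card, nsmul_eq_mul]
  have hTstmt : (∑ i : ZMod n, ‖b (i + 1) 0 - b i 0‖)
      * ((n : ℝ) * (1 - Real.cos (2 * π / n)))⁻¹ = T := by
    rw [hsum]
    have hcos : 1 - Real.cos (2 * π / n) = 2 * Real.sin (π / n) ^ 2 := by
      rw [show 2 * π / (n:ℝ) = 2 * (π / n) by ring, Real.cos_two_mul]
      nlinarith [Real.sin_sq_add_cos_sq (π / n)]
    rw [hcos, hT]
    field_simp
  -- the key identification with the explicit spiral solution on [0, T)
  have key : ∀ t ∈ Ico (0:ℝ) T, ∀ i : ZMod n,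
      b i t = pos c n R φ (2 * π * (i.val : ℝ) / n) t := by
    by_contra hbad
    push_neg at hbad
    obtain ⟨t0, ht0, i0, hne0⟩ := hbad
    set Bad := {t | t ∈ Ico (0:ℝ) T
      ∧ ¬ ∀ i : ZMod n, b i t = pos c n R φ (2 * π * (i.val : ℝ) / n) t} with hBad
    have ht0B : t0 ∈ Bad := ⟨ht0, fun hall => hne0 (hall i0)⟩
    have hBne : Bad.Nonempty := ⟨t0, ht0B⟩
    have hBbd : BddBelow Bad := ⟨0, fun x hx => hx.1.1⟩
    set τ := sInf Bad with hτdef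
    have hτmem : ∀ x ∈ Bad, τ ≤ x := fun x hx => csInf_le hBbd hx
    have hτ0 : 0 ≤ τ := le_csInf hBne fun x hx => hx.1.1
    have hτT : τ < T := lt_of_le_of_lt (hτmem t0 ht0B) ht0.2
    have hradτ : 0 < rad n R τ := rad_pos n hs hτT
    have hbefore : ∀ s, 0 ≤ s → s < τ → ∀ i : ZMod n,
        b i s = pos c n R φ (2 * π * (i.val : ℝ) / n) s := by
      intro s hs0 hsτ
      by_contra hc
      exact absurd (hτmem s ⟨⟨hs0, hsτ.trans hτT⟩, hc⟩) (not_le.2 hsτ)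
    have hatτ : ∀ i : ZMod n, b i τ = pos c n R φ (2 * π * (i.val : ℝ) / n) τ := by
      rcases eq_or_lt_of_le hτ0 with heq | hpos
      · intro i; rw [← heq]; exact hinit' i
      · intro i
        haveI : (𝓝[Ioo 0 τ] τ).NeBot := right_nhdsWithin_Ioo_neBot hpos
        have h1 : Tendsto (b i) (𝓝[Ioo 0 τ] τ) (𝓝 (b i τ)) :=
          ((hb.cont i) τ (mem_Ici.2 hτ0)).tendsto.mono_left
            (nhdsWithin_mono τ (fun x hx => le_of_lt hx.1))
        have h2 : Tendsto (fun s => pos c n R φ (2 * π * (i.val : ℝ) / n) s)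
            (𝓝[Ioo 0 τ] τ) (𝓝 (pos c n R φ (2 * π * (i.val : ℝ) / n) τ)) :=
          ((hasDerivAt_pos c n φ _ hs.ne' hradτ.ne').continuousAt).continuousWithinAt.tendsto
        have heqf : (b i) =ᶠ[𝓝[Ioo 0 τ] τ]
            (fun s => pos c n R φ (2 * π * (i.val : ℝ) / n) s) :=
          eventually_nhdsWithin_of_forall (fun s hs' => hbefore s hs'.1.le hs'.2 i)
        exact tendsto_nhds_unique (h1.congr' heqf) h2
    set t1 := (τ + T)/2 with ht1def
    have hτt1 : τ < t1 := by rw [ht1def]; linarith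
    have ht1T : t1 < T := by rw [ht1def]; linarith
    have hradt1 : 0 < rad n R t1 := rad_pos n hs ht1T
    set δ := rad n R t1 * Real.sin (π / n) with hδdef
    have hδ0 : 0 < δ := mul_pos hradt1 hs
    have hev : ∀ᶠ s in 𝓝[Ici 0] τ, ∀ i : ZMod n, δ < ‖b (i+1) s - b i s‖ := by
      rw [eventually_all]
      intro i
      have hcw : ContinuousWithinAt (fun s => ‖b (i+1) s - b i s‖) (Ici 0) τ :=
        (((hb.cont (i+1)) τ (mem_Ici.2 hτ0)).sub ((hb.cont i) τ (mem_Ici.2 hτ0))).norm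
      have hval : ‖b (i+1) τ - b i τ‖ = 2 * rad n R τ * Real.sin (π / n) := by
        rw [hatτ (i+1), hatτ i, pos_succ c n hn R φ τ i,
          norm_pos_sub c n φ _ hradτ.le hs.le]
      have hgt : δ < ‖b (i+1) τ - b i τ‖ := by
        rw [hval, hδdef]
        have hmono := rad_anti n R hτt1.le hs.le
        nlinarith
      exact hcw.tendsto.eventually_const_lt hgt
    obtain ⟨ε, hε0, hball⟩ := Metric.mem_nhdsWithin_iff.1 hev
    set t2 := min t1 (τ + ε/2) with ht2def
    have hτt2 : τ < t2 := lt_min hτt1 (by linarith)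
    have ht2t1 : t2 ≤ t1 := min_le_left _ _
    have ht2T : t2 < T := lt_of_le_of_lt ht2t1 ht1T
    have hsafe_b : ∀ s ∈ Icc τ t2, (fun i : ZMod n => b i s) ∈ safe n δ := by
      intro s hs' i
      have hmem : s ∈ Metric.ball τ ε ∩ Ici 0 := by
        constructor
        · rw [Metric.mem_ball, Real.dist_eq, abs_of_nonneg (by linarith [hs'.1])]
          have h2' : s ≤ τ + ε/2 := le_trans hs'.2 (min_le_right _ _)
          linarith
        · exact mem_Ici.2 (le_trans hτ0 hs'.1)
      exact (hball hmem i).le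
    have hsafe_P : ∀ s ∈ Icc τ t2,
        (fun i : ZMod n => pos c n R φ (2 * π * (i.val : ℝ) / n) s) ∈ safe n δ := by
      intro s hs' i
      show δ ≤ ‖pos c n R φ (2 * π * (((i+1).val : ℕ) : ℝ) / n) s
        - pos c n R φ (2 * π * (i.val : ℝ) / n) s‖
      have hrads : 0 < rad n R s := rad_pos n hs (lt_of_le_of_lt hs'.2 ht2T)
      rw [pos_succ c n hn R φ s i, norm_pos_sub c n φ _ hrads.le hs.le]
      have hmono := rad_anti n R (le_trans hs'.2 ht2t1) hs.le
      rw [hδdef]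
      nlinarith
    have hEq : EqOn (fun s => (fun i : ZMod n => b i s))
        (fun s => (fun i : ZMod n => pos c n R φ (2 * π * (i.val : ℝ) / n) s))
        (Icc τ t2) := by
      apply ODE_solution_unique_of_mem_Icc_right
        (v := fun _ x => Fv n x) (s := fun _ => safe n δ)
        (K := ⟨4/δ, by positivity⟩) (fun _ _ => Fv_lipschitz n hδ0)
      · exact continuousOn_pi.2 fun i =>
          (hb.cont i).mono (fun x hx => mem_Ici.2 (le_trans hτ0 hx.1))
      · intro s hsI
        apply hasDerivWithinAt_pi.2
        intro i
        have hd := hsafe_b s (Ico_subset_Icc_self hsI) i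
        have hne : b i s ≠ b (i+1) s := by
          intro hcontra
          rw [show b (i+1) s - b i s = 0 by rw [hcontra]; abel, norm_zero] at hd
          exact absurd hd (not_le.2 hδ0)
        exact hb.chase i s (le_trans hτ0 hsI.1) hne
      · exact fun s hsI => hsafe_b s (Ico_subset_Icc_self hsI)
      · refine continuousOn_pi.2 fun i => fun s hsI => ?_
        have hrads : 0 < rad n R s := rad_pos n hs (lt_of_le_of_lt hsI.2 ht2T)
        exact ((hasDerivAt_pos c n φ _ hs.ne' hrads.ne').continuousAt).continuousWithinAt
      · intro s hsI
        apply hasDerivWithinAt_pi.2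
        intro i
        have hrads : 0 < rad n R s := rad_pos n hs (lt_of_lt_of_le
          (lt_of_le_of_lt (le_of_lt hsI.2) ht2T) (le_refl T))
        rw [Fv_pos c n hn φ hrads i]
        exact (hasDerivAt_pos c n φ _ hs.ne' hrads.ne').hasDerivWithinAt
      · exact fun s hsI => hsafe_P s (Ico_subset_Icc_self hsI)
      · exact funext hatτ
    obtain ⟨x, hxB, hxlt⟩ := exists_lt_of_csInf_lt hBne hτt2
    have hxτ : τ ≤ x := hτmem x hxB
    exact hxB.2 fun i => congrFun (hEq ⟨hxτ, hxlt.le⟩) i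
  -- all bugs reach the center at time T
  have hbT : ∀ i : ZMod n, b i T = c := by
    intro i
    haveI : (𝓝[Ioo 0 T] T).NeBot := right_nhdsWithin_Ioo_neBot hT0
    have h1 : Tendsto (b i) (𝓝[Ioo 0 T] T) (𝓝 (b i T)) :=
      ((hb.cont i) T (mem_Ici.2 hT0.le)).tendsto.mono_left
        (nhdsWithin_mono T (fun x hx => le_of_lt hx.1))
    have heqf : (b i) =ᶠ[𝓝[Ioo 0 T] T]
        (fun s => pos c n R φ (2 * π * (i.val : ℝ) / n) s) :=
      eventually_nhdsWithin_of_forall (fun s hs' => key s ⟨hs'.1.le, hs'.2⟩ i)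
    have h2 : Tendsto (fun s => pos c n R φ (2 * π * (i.val : ℝ) / n) s)
        (𝓝[Ioo 0 T] T) (𝓝 c) := by
      rw [tendsto_iff_norm_sub_tendsto_zero]
      have hradc : Continuous (fun s => |rad n R s|) := by
        unfold rad; fun_prop
      have hradT : rad n R T = 0 := by
        rw [hT]; unfold rad; field_simp; ring
      have h3 : Tendsto (fun s => |rad n R s|) (𝓝[Ioo 0 T] T) (𝓝 0) := by
        have := (hradc.tendsto T).mono_left (nhdsWithin_le_nhds (s := Ioo 0 T))
        rwa [hradT, abs_zero] at this
      exact h3.congr (fun s => (pos_dist_center c n R φ _ s).symm)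
    exact tendsto_nhds_unique (h1.congr' heqf) h2
  constructor
  · intro i
    rw [hTstmt, hbT i, hbT 0]
  · intro t ht0' htT hall
    rw [hTstmt] at htT
    have hradt : 0 < rad n R t := rad_pos n hs htT
    have h01 : b 1 t = b 0 t := hall 1
    rw [key t ⟨ht0', htT⟩ 1, key t ⟨ht0', htT⟩ 0] at h01
    have hang0 : 2 * π * (((0 : ZMod n).val : ℕ) : ℝ) / n = 0 := by
      rw [ZMod.val_zero]; norm_num
    have hang1 : 2 * π * (((1 : ZMod n).val : ℕ) : ℝ) / n = 0 + 2 * π / n := by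
      rw [ZMod.val_one_eq_one_mod, Nat.mod_eq_of_lt hn]
      norm_num
    rw [hang0, hang1] at h01
    have hnorm := norm_pos_sub c n φ 0 (t := t) hradt.le hs.le
    rw [h01, sub_self, norm_zero] at hnorm
    nlinarith
end
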